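/- Let m_n be a sequence of positive integers with m_n → ∞ and m_n/n → 0, and let a_{k,n} = a_{k,n}(m_n) be the OLS weights based on x_k = −2log(2πk/n). Then lim_{n→∞} m_n ∑_{k=1}^{m_n} a_{k,n}² = 1/4 and max_{1≤k≤m_n} |a_{k,n}| = O(m_n^{−1/2} log m_n). -/

import Mathlib

open Real Filter

/-- The OLS weight `a_{k,n}(m)` of the log-periodogram (GPH) regression, built from the
regressors `x_i = −2 log(2πi/n)`. -/
noncomputable def gphWeight (n m k : ℕ) : ℝ :=
  let x : ℕ → ℝ := fun i => -2 * Real.log (2 * π * i / n)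
  let xbar : ℝ := (m : ℝ)⁻¹ * ∑ j ∈ Finset.Icc 1 m, x j
  (x k - xbar) / ∑ i ∈ Finset.Icc 1 m, (x i - xbar) ^ 2

noncomputable def gphLsum (M : ℕ) : ℝ := ∑ k ∈ Finset.Icc 1 M, Real.log k

noncomputable def gphQsum (M : ℕ) : ℝ := ∑ k ∈ Finset.Icc 1 M, (Real.log k) ^ 2

/-- The centered sum of squares of `log k`. -/
noncomputable def gphS (M : ℕ) : ℝ :=
  ∑ k ∈ Finset.Icc 1 M, (Real.log k - (M : ℝ)⁻¹ * gphLsum M) ^ 2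

lemma gph_sum_int_bounds (f : ℝ → ℝ) (M : ℕ) (hM : 1 ≤ M) (hf1 : f 1 = 0)
    (hmono : MonotoneOn f (Set.Icc (1 : ℝ) (M : ℝ))) :
    (∫ x in (1:ℝ)..(M:ℝ), f x) ≤ ∑ k ∈ Finset.Icc 1 M, f k ∧
      ∑ k ∈ Finset.Icc 1 M, f k ≤ (∫ x in (1:ℝ)..(M:ℝ), f x) + f M := by
  have hmono' : MonotoneOn f (Set.Icc ((1:ℕ):ℝ) ((M:ℕ):ℝ)) := by
    simpa using hmono
  have h1 := MonotoneOn.sum_le_integral_Ico hM hmono'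
  have h2 := MonotoneOn.integral_le_sum_Ico hM hmono'
  -- relate the two Ico sums to the Icc sum
  have key1 : ∑ i ∈ Finset.Ico 1 M, f ((i + 1 : ℕ) : ℝ) = ∑ k ∈ Finset.Icc 1 M, f k := by
    have hmap : ∑ i ∈ Finset.Ico 1 M, f ((i + 1 : ℕ) : ℝ)
        = ∑ k ∈ Finset.Ico 2 (M + 1), f (k : ℝ) := by
      rw [show (2:ℕ) = 1 + 1 by rfl, show M + 1 = M + 1 by rfl,
        ← Finset.map_add_right_Ico 1 M 1, Finset.sum_map]
      rfl
    rw [hmap]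
    have : Finset.Icc 1 M = insert 1 (Finset.Ico 2 (M + 1)) := by
      ext i; simp [Finset.mem_Icc, Finset.mem_Ico]; omega
    rw [this, Finset.sum_insert (by simp [Finset.mem_Ico])]
    simp [hf1]
  have key2 : ∑ k ∈ Finset.Icc 1 M, f k = (∑ i ∈ Finset.Ico 1 M, f (i : ℝ)) + f M := by
    rw [← Finset.Ico_add_one_right_eq_Icc, Finset.sum_Ico_succ_top hM]
  constructor
  · calc (∫ x in (1:ℝ)..(M:ℝ), f x) = ∫ x in ((1:ℕ):ℝ)..((M:ℕ):ℝ), f x := by norm_num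
    _ ≤ ∑ i ∈ Finset.Ico 1 M, f ((i + 1 : ℕ) : ℝ) := h2
    _ = ∑ k ∈ Finset.Icc 1 M, f k := key1
  · calc ∑ k ∈ Finset.Icc 1 M, f k = (∑ i ∈ Finset.Ico 1 M, f (i : ℝ)) + f M := key2
    _ ≤ (∫ x in ((1:ℕ):ℝ)..((M:ℕ):ℝ), f x) + f M := by gcongr
    _ = (∫ x in (1:ℝ)..(M:ℝ), f x) + f M := by norm_num

lemma gph_integral_log (M : ℕ) (hM : 1 ≤ M) :
    ∫ x in (1:ℝ)..(M:ℝ), Real.log x = M * Real.log M - M + 1 := by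
  have hM0 : (0:ℝ) < M := by exact_mod_cast hM
  rw [integral_log]
  simp

lemma gph_integral_log_sq (M : ℕ) (hM : 1 ≤ M) :
    ∫ x in (1:ℝ)..(M:ℝ), (Real.log x) ^ 2
      = M * (Real.log M) ^ 2 - 2 * M * Real.log M + 2 * M - 2 := by
  have hM1 : (1:ℝ) ≤ M := by exact_mod_cast hM
  have hderiv : ∀ x ∈ Set.uIcc (1:ℝ) (M:ℝ),
      HasDerivAt (fun x : ℝ => x * Real.log x ^ 2 - 2 * (x * Real.log x) + 2 * x)
        (Real.log x ^ 2) x := by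
    intro x hx
    rw [Set.uIcc_of_le hM1] at hx
    have hx0 : x ≠ 0 := by have := hx.1; positivity
    have hxpos : (0:ℝ) < x := lt_of_lt_of_le one_pos hx.1
    have hlog := Real.hasDerivAt_log hx0
    have hlog2 : HasDerivAt (fun x => Real.log x ^ 2) (2 * Real.log x ^ 1 * x⁻¹) x := by
      simpa using hlog.fun_pow 2
    have h1 := (hasDerivAt_id x).fun_mul hlog2
    have h2 := ((hasDerivAt_id x).fun_mul hlog).const_mul (2:ℝ)
    have h3 := (hasDerivAt_id x).const_mul (2:ℝ)
    have := (h1.fun_sub h2).fun_add h3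
    refine this.congr_deriv ?_
    simp only [id]
    field_simp
    ring
  have hint : IntervalIntegrable (fun x => Real.log x ^ 2) MeasureTheory.volume 1 (M:ℝ) := by
    apply ContinuousOn.intervalIntegrable
    apply ContinuousOn.pow
    apply Real.continuousOn_log.mono
    intro x hx
    rw [Set.uIcc_of_le hM1] at hx
    have : (0:ℝ) < x := lt_of_lt_of_le one_pos hx.1
    simpa using this.ne'
  rw [intervalIntegral.integral_eq_sub_of_hasDerivAt hderiv hint]
  simp; ring

lemma gph_log_lower (M : ℕ) (hM : 1 ≤ M) : 0 ≤ (M:ℝ) * Real.log M - M + 1 := by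
  have hM0 : (0:ℝ) < M := by exact_mod_cast hM
  have h := Real.log_le_sub_one_of_pos (inv_pos.mpr hM0)
  rw [Real.log_inv] at h
  have : (1:ℝ) - (M:ℝ)⁻¹ ≤ Real.log M := by linarith
  have h2 : (M:ℝ) * (1 - (M:ℝ)⁻¹) ≤ M * Real.log M :=
    mul_le_mul_of_nonneg_left this hM0.le
  have h3 : (M:ℝ) * (1 - (M:ℝ)⁻¹) = M - 1 := by field_simp
  linarith

lemma gph_Lsum_bounds (M : ℕ) (hM : 1 ≤ M) :
    (M:ℝ) * Real.log M - M + 1 ≤ gphLsum M ∧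
      gphLsum M ≤ (M:ℝ) * Real.log M - M + 1 + Real.log M := by
  have hM1 : (1:ℝ) ≤ M := by exact_mod_cast hM
  have hmono : MonotoneOn Real.log (Set.Icc (1:ℝ) (M:ℝ)) := by
    intro x hx y _ hxy
    exact Real.log_le_log (lt_of_lt_of_le one_pos hx.1) hxy
  have := gph_sum_int_bounds Real.log M hM Real.log_one hmono
  rw [gph_integral_log M hM] at this
  exact ⟨this.1, this.2⟩

lemma gph_Qsum_bounds (M : ℕ) (hM : 1 ≤ M) :
    (M:ℝ) * (Real.log M) ^ 2 - 2 * M * Real.log M + 2 * M - 2 ≤ gphQsum M ∧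
      gphQsum M ≤ (M:ℝ) * (Real.log M) ^ 2 - 2 * M * Real.log M + 2 * M - 2
        + (Real.log M) ^ 2 := by
  have hmono : MonotoneOn (fun x => (Real.log x) ^ 2) (Set.Icc (1:ℝ) (M:ℝ)) := by
    intro x hx y hy hxy
    have hx0 : (0:ℝ) < x := lt_of_lt_of_le one_pos hx.1
    have h1 : 0 ≤ Real.log x := Real.log_nonneg hx.1
    have h2 : Real.log x ≤ Real.log y := Real.log_le_log hx0 hxy
    simpa using pow_le_pow_left₀ h1 h2 2
  have := gph_sum_int_bounds (fun x => (Real.log x) ^ 2) M hM (by simp) hmono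
  rw [gph_integral_log_sq M hM] at this
  exact ⟨this.1, this.2⟩

lemma gphS_mul (M : ℕ) (hM : 1 ≤ M) :
    gphS M * M = gphQsum M * M - gphLsum M ^ 2 := by
  have hM0 : (M:ℝ) ≠ 0 := by positivity
  set c : ℝ := (M:ℝ)⁻¹ * gphLsum M with hc
  have hcard : ((Finset.Icc 1 M).card : ℝ) = M := by
    rw [Nat.card_Icc]; push_cast; ring
  have hexp : gphS M = gphQsum M - 2 * c * gphLsum M + M * c ^ 2 := by
    have : gphS M = ∑ k ∈ Finset.Icc 1 M,
        ((Real.log k) ^ 2 - 2 * c * Real.log k + c ^ 2) := by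
      apply Finset.sum_congr rfl
      intro k _; ring
    rw [this, Finset.sum_add_distrib, Finset.sum_sub_distrib, Finset.sum_const,
      ← Finset.mul_sum, nsmul_eq_mul, hcard]
    rfl
  have hcM : c * M = gphLsum M := by
    rw [hc]; field_simp
  rw [hexp]
  have : (gphQsum M - 2 * c * gphLsum M + M * c ^ 2) * M
      = gphQsum M * M - 2 * (c * M) * gphLsum M + (c * M) ^ 2 := by ring
  rw [this, hcM]; ring

lemma gphS_close (M : ℕ) (hM : 1 ≤ M) :
    |gphS M - M| ≤ 3 * (1 + Real.log M) ^ 2 := by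
  have hM0 : (0:ℝ) < M := by exact_mod_cast hM
  have hM1 : (1:ℝ) ≤ M := by exact_mod_cast hM
  set ℓ := Real.log M with hℓ
  have hℓ0 : 0 ≤ ℓ := Real.log_nonneg hM1
  obtain ⟨hL1, hL2⟩ := gph_Lsum_bounds M hM
  obtain ⟨hQ1, hQ2⟩ := gph_Qsum_bounds M hM
  have hI1 : 0 ≤ (M:ℝ) * ℓ - M + 1 := gph_log_lower M hM
  have hLpos : 0 ≤ gphLsum M := le_trans hI1 hL1
  have hL2low : ((M:ℝ) * ℓ - M + 1) ^ 2 ≤ gphLsum M ^ 2 := by nlinarith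
  have hL2high : gphLsum M ^ 2 ≤ ((M:ℝ) * ℓ - M + 1 + ℓ) ^ 2 := by nlinarith
  have hSM := gphS_mul M hM
  have key : |gphS M * M - M * M| ≤ 3 * (1 + ℓ) ^ 2 * M := by
    rw [abs_le]
    constructor
    · rw [hSM]
      have hQM : ((M:ℝ) * ℓ ^ 2 - 2 * M * ℓ + 2 * M - 2) * M ≤ gphQsum M * M := by
        apply mul_le_mul_of_nonneg_right hQ1 hM0.le
      nlinarith
    · rw [hSM]
      have hQM : gphQsum M * M
          ≤ ((M:ℝ) * ℓ ^ 2 - 2 * M * ℓ + 2 * M - 2 + ℓ ^ 2) * M := by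
        apply mul_le_mul_of_nonneg_right hQ2 hM0.le
      nlinarith
  have hfac : gphS M * M - M * M = (gphS M - M) * M := by ring
  rw [hfac, abs_mul, abs_of_pos hM0] at key
  calc |gphS M - M| = |gphS M - M| * M / M := by field_simp
  _ ≤ 3 * (1 + ℓ) ^ 2 * M / M := by gcongr
  _ = 3 * (1 + ℓ) ^ 2 := by field_simp

lemma gphS_div_tendsto : Tendsto (fun M : ℕ => gphS M / M) atTop (nhds 1) := by
  have hbound : Tendsto (fun x : ℝ => 3 * (1 + Real.log x) ^ 2 / x) atTop (nhds 0) := by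
    have h0 : Tendsto (fun x : ℝ => x⁻¹) atTop (nhds 0) := tendsto_inv_atTop_zero
    have h1 : Tendsto (fun x : ℝ => Real.log x ^ 1 / (1 * x + 0)) atTop (nhds 0) :=
      Real.tendsto_pow_log_div_mul_add_atTop 1 0 1 one_ne_zero
    have h2 : Tendsto (fun x : ℝ => Real.log x ^ 2 / (1 * x + 0)) atTop (nhds 0) :=
      Real.tendsto_pow_log_div_mul_add_atTop 1 0 2 one_ne_zero
    have := ((h0.const_mul 3).add (h1.const_mul 6)).add (h2.const_mul 3)
    have heq : (fun x : ℝ => 3 * x⁻¹ + 6 * (Real.log x ^ 1 / (1 * x + 0))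
        + 3 * (Real.log x ^ 2 / (1 * x + 0))) = fun x : ℝ => 3 * (1 + Real.log x) ^ 2 / x := by
      funext x
      field_simp
      ring
    rw [heq] at this
    simpa using this
  have hboundN : Tendsto (fun M : ℕ => 3 * (1 + Real.log M) ^ 2 / M) atTop (nhds 0) :=
    hbound.comp tendsto_natCast_atTop_atTop
  have hdiff : Tendsto (fun M : ℕ => gphS M / M - 1) atTop (nhds 0) := by
    apply squeeze_zero_norm' _ hboundN
    filter_upwards [eventually_ge_atTop 1] with M hM
    have hM0 : (0:ℝ) < M := by exact_mod_cast hM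
    have h := gphS_close M hM
    have : gphS M / M - 1 = (gphS M - M) / M := by field_simp
    rw [Real.norm_eq_abs, this, abs_div, abs_of_pos hM0]
    gcongr
  have := hdiff.add_const 1
  simpa using this

lemma gph_weight_eq (n M k : ℕ) (hn : 1 ≤ n) (hM : 1 ≤ M) (hk : k ∈ Finset.Icc 1 M) :
    gphWeight n M k
      = (-2 * (Real.log k - (M : ℝ)⁻¹ * gphLsum M)) / (4 * gphS M) := by
  have hn0 : (0:ℝ) < n := by exact_mod_cast hn
  have hM0 : (M:ℝ) ≠ 0 := by positivity
  set c : ℝ := Real.log (2 * π) - Real.log n with hc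
  have hx : ∀ i : ℕ, 1 ≤ i →
      -2 * Real.log (2 * π * i / n) = -2 * (c + Real.log i) := by
    intro i hi
    have hi0 : (0:ℝ) < i := by exact_mod_cast hi
    have h2pi : (0:ℝ) < 2 * π := by positivity
    rw [Real.log_div (by positivity) hn0.ne', Real.log_mul h2pi.ne' hi0.ne']
    ring
  have hsum : ∑ j ∈ Finset.Icc 1 M, (-2) * Real.log (2 * π * j / n)
      = -2 * ((M:ℝ) * c + gphLsum M) := by
    have : ∑ j ∈ Finset.Icc 1 M, (-2) * Real.log (2 * π * j / n)
        = ∑ j ∈ Finset.Icc 1 M, (-2 * c + -2 * Real.log j) := by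
      apply Finset.sum_congr rfl
      intro j hj
      rw [hx j (Finset.mem_Icc.mp hj).1]
      ring
    rw [this, Finset.sum_add_distrib, Finset.sum_const, ← Finset.mul_sum, Nat.card_Icc,
      nsmul_eq_mul]
    have : ((M + 1 - 1 : ℕ) : ℝ) = M := by push_cast; ring
    rw [this]
    show (M:ℝ) * (-2 * c) + -2 * gphLsum M = _
    ring
  have hxbar : (M:ℝ)⁻¹ * ∑ j ∈ Finset.Icc 1 M, (-2) * Real.log (2 * π * j / n)
      = -2 * (c + (M:ℝ)⁻¹ * gphLsum M) := by
    have hMM : (M:ℝ)⁻¹ * (M:ℝ) = 1 := inv_mul_cancel₀ hM0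
    have hmix : (M:ℝ)⁻¹ * (-2 * ((M:ℝ) * c + gphLsum M))
        = -2 * (((M:ℝ)⁻¹ * (M:ℝ)) * c + (M:ℝ)⁻¹ * gphLsum M) := by ring
    rw [hsum, hmix, hMM]
    ring
  have hdiff : ∀ i : ℕ, 1 ≤ i →
      (-2 * Real.log (2 * π * i / n)
        - (M:ℝ)⁻¹ * ∑ j ∈ Finset.Icc 1 M, (-2) * Real.log (2 * π * j / n))
      = -2 * (Real.log i - (M:ℝ)⁻¹ * gphLsum M) := by
    intro i hi
    rw [hxbar, hx i hi]
    ring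
  have hdenom : ∑ i ∈ Finset.Icc 1 M,
      (-2 * Real.log (2 * π * i / n)
        - (M:ℝ)⁻¹ * ∑ j ∈ Finset.Icc 1 M, (-2) * Real.log (2 * π * j / n)) ^ 2
      = 4 * gphS M := by
    calc ∑ i ∈ Finset.Icc 1 M,
        (-2 * Real.log (2 * π * i / n)
          - (M:ℝ)⁻¹ * ∑ j ∈ Finset.Icc 1 M, (-2) * Real.log (2 * π * j / n)) ^ 2
        = ∑ i ∈ Finset.Icc 1 M, 4 * (Real.log i - (M:ℝ)⁻¹ * gphLsum M) ^ 2 := by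
          apply Finset.sum_congr rfl
          intro i hi
          rw [hdiff i (Finset.mem_Icc.mp hi).1]
          ring
      _ = 4 * gphS M := by rw [gphS, Finset.mul_sum]
  simp only [gphWeight]
  rw [hdenom, hdiff k (Finset.mem_Icc.mp hk).1]

/-- If `m_n → ∞` and `m_n/n → 0`, then `m_n ∑_{k=1}^{m_n} a_{k,n}² → 1/4` and
`max_{1≤k≤m_n} |a_{k,n}| = O(m_n^{−1/2} log m_n)`. -/
theorem gph_weights_asymptotics (m : ℕ → ℕ)
    (hm : Tendsto (fun n => (m n : ℝ)) atTop atTop)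
    (hmn : Tendsto (fun n => (m n : ℝ) / n) atTop (nhds 0)) :
    Tendsto (fun n => (m n : ℝ) * ∑ k ∈ Finset.Icc 1 (m n), (gphWeight n (m n) k) ^ 2)
        atTop (nhds (1 / 4)) ∧
    ∃ C : ℝ, 0 < C ∧ ∀ᶠ n in atTop, ∀ k ∈ Finset.Icc 1 (m n),
      |gphWeight n (m n) k| ≤ C * ((m n : ℝ) ^ (-(1 : ℝ) / 2) * Real.log (m n)) := by
  have hmN : Tendsto m atTop atTop := tendsto_natCast_atTop_iff.mp hm
  have hS1 : Tendsto (fun n => gphS (m n) / (m n)) atTop (nhds 1) :=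
    gphS_div_tendsto.comp hmN
  have hE : ∀ᶠ n in atTop,
      1 ≤ n ∧ 1 ≤ m n ∧ (m n : ℝ) / 2 ≤ gphS (m n) ∧ 0 < gphS (m n) := by
    filter_upwards [eventually_ge_atTop 1, hmN.eventually_ge_atTop 1,
      hS1.eventually (eventually_gt_nhds (show (1:ℝ)/2 < 1 by norm_num))] with n h1 h2 h3
    have hM0 : (0:ℝ) < m n := by exact_mod_cast h2
    have h3' : (1:ℝ)/2 * (m n) < gphS (m n) := (lt_div_iff₀ hM0).mp h3
    have hShalf : (m n : ℝ) / 2 ≤ gphS (m n) := by linarith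
    exact ⟨h1, h2, hShalf, lt_of_lt_of_le (by positivity) hShalf⟩
  constructor
  · have heq : ∀ᶠ n in atTop,
        (m n : ℝ) * ∑ k ∈ Finset.Icc 1 (m n), gphWeight n (m n) k ^ 2
          = (4 * (gphS (m n) / (m n)))⁻¹ := by
      filter_upwards [hE] with n ⟨h1, h2, h3, h4⟩
      have hM0 : (0:ℝ) < m n := by exact_mod_cast h2
      have hsum : ∑ k ∈ Finset.Icc 1 (m n), gphWeight n (m n) k ^ 2
          = ∑ k ∈ Finset.Icc 1 (m n),
              4 * (Real.log k - ((m n : ℝ))⁻¹ * gphLsum (m n)) ^ 2 / (4 * gphS (m n)) ^ 2 := by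
        apply Finset.sum_congr rfl
        intro k hk
        rw [gph_weight_eq n (m n) k h1 h2 hk, div_pow]
        congr 1
        ring
      rw [hsum, ← Finset.sum_div, ← Finset.mul_sum, ← gphS]
      field_simp
    have hlim : Tendsto (fun n => (4 * (gphS (m n) / (m n)))⁻¹) atTop (nhds ((4:ℝ) * 1)⁻¹) :=
      (hS1.const_mul 4).inv₀ (by norm_num)
    rw [show ((4:ℝ) * 1)⁻¹ = 1/4 by norm_num] at hlim
    exact hlim.congr' (heq.mono fun n h => h.symm)
  · refine ⟨1, one_pos, ?_⟩
    filter_upwards [hE] with n ⟨h1, h2, h3, h4⟩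
    intro k hk
    have hM0 : (0:ℝ) < m n := by exact_mod_cast h2
    have hM1 : (1:ℝ) ≤ m n := by exact_mod_cast h2
    have hℓ0 : 0 ≤ Real.log (m n) := Real.log_nonneg hM1
    obtain ⟨hk1, hk2⟩ := Finset.mem_Icc.mp hk
    have hk0 : (0:ℝ) < k := by exact_mod_cast hk1
    have hlogk0 : 0 ≤ Real.log k := Real.log_nonneg (by exact_mod_cast hk1)
    have hlogk : Real.log k ≤ Real.log (m n) :=
      Real.log_le_log hk0 (by exact_mod_cast hk2)
    -- bounds on the average
    have hLnonneg : 0 ≤ gphLsum (m n) := by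
      apply Finset.sum_nonneg
      intro j hj
      exact Real.log_nonneg (by exact_mod_cast (Finset.mem_Icc.mp hj).1)
    have hLle : gphLsum (m n) ≤ (m n : ℝ) * Real.log (m n) := by
      have := Finset.sum_le_card_nsmul (Finset.Icc 1 (m n))
          (fun j => Real.log j) (Real.log (m n)) ?_
      · rw [Nat.card_Icc, nsmul_eq_mul] at this
        calc gphLsum (m n) ≤ ((m n + 1 - 1 : ℕ) : ℝ) * Real.log (m n) := this
        _ = (m n : ℝ) * Real.log (m n) := by norm_num
      · intro j hj
        obtain ⟨hj1, hj2⟩ := Finset.mem_Icc.mp hj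
        exact Real.log_le_log (by exact_mod_cast hj1) (by exact_mod_cast hj2)
    have hLbar0 : 0 ≤ ((m n : ℝ))⁻¹ * gphLsum (m n) := by positivity
    have hLbar1 : ((m n : ℝ))⁻¹ * gphLsum (m n) ≤ Real.log (m n) := by
      rw [inv_mul_le_iff₀ hM0]
      exact hLle
    have habs : |Real.log k - ((m n : ℝ))⁻¹ * gphLsum (m n)| ≤ Real.log (m n) :=
      abs_le.mpr ⟨by linarith, by linarith⟩
    have h4S : (0:ℝ) < 4 * gphS (m n) := by linarith
    rw [gph_weight_eq n (m n) k h1 h2 hk, abs_div, abs_of_pos h4S]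
    have step1 : |(-2) * (Real.log k - ((m n : ℝ))⁻¹ * gphLsum (m n))| / (4 * gphS (m n))
        ≤ 2 * Real.log (m n) / (4 * gphS (m n)) := by
      gcongr
      rw [abs_mul]
      have h2abs : |(-2 : ℝ)| = 2 := by norm_num
      rw [h2abs]
      linarith
    have step2 : 2 * Real.log (m n) / (4 * gphS (m n))
        ≤ 2 * Real.log (m n) / (2 * (m n : ℝ)) := by
      apply div_le_div_of_nonneg_left (by linarith) (by linarith) (by linarith)
    have step3 : 2 * Real.log (m n) / (2 * (m n : ℝ)) = Real.log (m n) / (m n : ℝ) :=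
      mul_div_mul_left _ _ two_ne_zero
    have step4 : Real.log (m n) / (m n : ℝ)
        ≤ (m n : ℝ) ^ (-(1:ℝ)/2) * Real.log (m n) := by
      rw [div_eq_mul_inv, ← Real.rpow_neg_one (m n : ℝ)]
      rw [mul_comm]
      apply mul_le_mul_of_nonneg_right _ hℓ0
      exact Real.rpow_le_rpow_of_exponent_le hM1 (by norm_num)
    calc |(-2) * (Real.log k - ((m n : ℝ))⁻¹ * gphLsum (m n))| / (4 * gphS (m n))
        ≤ 2 * Real.log (m n) / (4 * gphS (m n)) := step1
    _ ≤ 2 * Real.log (m n) / (2 * (m n : ℝ)) := step2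
    _ = Real.log (m n) / (m n : ℝ) := step3
    _ ≤ (m n : ℝ) ^ (-(1:ℝ)/2) * Real.log (m n) := step4
    _ = 1 * ((m n : ℝ) ^ (-(1:ℝ)/2) * Real.log (m n)) := by rw [one_mul]
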